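/- Let μ be a probability measure on real fields on the d-dimensional discrete torus that is invariant under point reflection x ↦ (u ↦ x(−u)). Let ψ, ψ' be complex kernels satisfying the Hermitian symmetry ψ(−u) = conj(ψ(u)) and ψ'(−u) = conj(ψ'(u)) for all u. Then, assuming integrability, the third-order scattering moment at the origin is real: Im E_μ[ |(x⋆ψ)(0)| · conj((x⋆ψ')(0)) ] = 0. -/

import Mathlib

open MeasureTheory Complex

/-- Convolution of a real field on the `d`-dimensional discrete torus with a complex
kernel: `(x⋆ψ)(u) = Σ_{u'} x(u')·ψ(u − u')`. -/
noncomputable def conv (d L : ℕ) [NeZero L] (x : (Fin d → ZMod L) → ℝ)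
    (ψ : (Fin d → ZMod L) → ℂ) (u : Fin d → ZMod L) : ℂ :=
  ∑ u' : Fin d → ZMod L, (x u' : ℂ) * ψ (u - u')

lemma conv_reflect (d L : ℕ) [NeZero L] (x : (Fin d → ZMod L) → ℝ)
    (ψ : (Fin d → ZMod L) → ℂ) (hψ : ∀ u, ψ (-u) = (starRingEnd ℂ) (ψ u)) :
    conv d L (fun u => x (-u)) ψ 0 = (starRingEnd ℂ) (conv d L x ψ 0) := by
  unfold conv
  rw [map_sum]
  refine Fintype.sum_equiv (Equiv.neg (Fin d → ZMod L)) _ _ fun u' => ?_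
  simp only [Equiv.neg_apply, neg_neg, map_mul, Complex.conj_ofReal, zero_sub]
  rw [hψ u']

/-- If the distribution of a field is invariant under point reflection and the kernels
are Hermitian symmetric, the third-order scattering moment at the origin is real. -/
theorem stmt_10 (d L : ℕ) [NeZero L] (hL : 1 ≤ L)
    (μ : Measure ((Fin d → ZMod L) → ℝ)) [IsProbabilityMeasure μ]
    (hrefl : μ.map (fun x : (Fin d → ZMod L) → ℝ => fun u => x (-u)) = μ)
    (ψ ψ' : (Fin d → ZMod L) → ℂ)
    (hψ : ∀ u, ψ (-u) = (starRingEnd ℂ) (ψ u))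
    (hψ' : ∀ u, ψ' (-u) = (starRingEnd ℂ) (ψ' u))
    (hint : Integrable
      (fun x => ((‖conv d L x ψ 0‖ : ℝ) : ℂ) *
        (starRingEnd ℂ) (conv d L x ψ' 0)) μ) :
    (∫ x, ((‖conv d L x ψ 0‖ : ℝ) : ℂ) *
        (starRingEnd ℂ) (conv d L x ψ' 0) ∂μ).im = 0 := by
  set f : ((Fin d → ZMod L) → ℝ) → ℂ := fun x =>
    ((‖conv d L x ψ 0‖ : ℝ) : ℂ) * (starRingEnd ℂ) (conv d L x ψ' 0)
  have hmeas : Measurable (fun x : (Fin d → ZMod L) → ℝ => fun u => x (-u)) :=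
    measurable_pi_lambda _ fun u => measurable_pi_apply _
  have key : ∫ x, f x ∂μ = ∫ x, f (fun u => x (-u)) ∂μ := by
    conv_lhs => rw [← hrefl]
    rw [integral_map hmeas.aemeasurable]
    rw [hrefl]
    exact hint.aestronglyMeasurable
  have hpt : ∀ x, f (fun u => x (-u)) = (starRingEnd ℂ) (f x) := by
    intro x
    simp only [f, conv_reflect d L x ψ hψ, conv_reflect d L x ψ' hψ', map_mul,
      Complex.conj_ofReal, Complex.norm_conj, Complex.conj_conj]
  simp only [hpt] at key
  rw [integral_conj] at key
  have := congrArg Complex.im key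
  simp only [Complex.conj_im] at this
  linarith
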